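/- arXiv:1603.04024 — 2 statements merged into one kernel-verified Lean document; each statement's English description precedes it below -/
import Mathlib

section
/- Let −1 < p ≤ 0. For all real x, 𝓘_{p+1}(x) ≤ (1 + (p+1)·𝓘_p(x))/(p+2). -/
open Real

noncomputable def besselJn (p x : ℝ) : ℝ :=
  ∑' n : ℕ, (-(1:ℝ)/4)^n * x^(2*n) / ((Real.Gamma (p+n+1) / Real.Gamma (p+1)) * n.factorial)

noncomputable def besselIn (p x : ℝ) : ℝ :=
  ∑' n : ℕ, ((1:ℝ)/4)^n * x^(2*n) / ((Real.Gamma (p+n+1) / Real.Gamma (p+1)) * n.factorial)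

noncomputable def besselJ (p x : ℝ) : ℝ :=
  ∑' n : ℕ, (-1:ℝ)^n * (x/2)^(p+2*n) / (n.factorial * Real.Gamma (p+n+1))

lemma gamma_pnn_pos (p : ℝ) (hp : -1 < p) (n : ℕ) : 0 < Real.Gamma (p + n + 1) := by
  apply Real.Gamma_pos_of_pos
  have : (0:ℝ) ≤ n := Nat.cast_nonneg n
  linarith

lemma gamma_rec (p : ℝ) (hp : -1 < p) (n : ℕ) :
    Real.Gamma (p + (n+1:ℕ) + 1) = (p + n + 1) * Real.Gamma (p + n + 1) := by
  have hpos : (0:ℝ) < p + n + 1 := by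
    have : (0:ℝ) ≤ n := Nat.cast_nonneg n
    linarith
  have h : (p + ((n:ℕ)+1:ℕ) + 1 : ℝ) = (p + n + 1) + 1 := by push_cast; ring
  rw [h, Real.Gamma_add_one (ne_of_gt hpos)]

lemma poch_lower (q : ℝ) (h1 : -1 < q) (h2 : q ≤ 1) (n : ℕ) :
    ((q+1)/2)^(n+1) * n.factorial ≤ Real.Gamma (q+n+1) / Real.Gamma (q+1) := by
  induction n with
  | zero =>
    simp only [Nat.cast_zero, add_zero, Nat.factorial_zero, Nat.cast_one, mul_one, pow_one]
    rw [div_self (ne_of_gt (Real.Gamma_pos_of_pos (by linarith)))]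
    linarith
  | succ n ih =>
    rw [gamma_rec q h1 n]
    have hG : 0 < Real.Gamma (q + n + 1) := gamma_pnn_pos q h1 n
    have hG1 : 0 < Real.Gamma (q + 1) := Real.Gamma_pos_of_pos (by linarith)
    have hn : (0:ℝ) ≤ n := Nat.cast_nonneg n
    have key : ((q+1)/2) * (n+1) ≤ q + n + 1 := by nlinarith
    have hfac : (Nat.factorial (n+1) : ℝ) = (n+1) * n.factorial := by
      push_cast [Nat.factorial_succ]; ring
    rw [mul_div_assoc]
    calc ((q+1)/2)^(n+1+1) * (Nat.factorial (n+1) : ℝ)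
        = ((q+1)/2 * ((n:ℝ)+1)) * (((q+1)/2)^(n+1) * n.factorial) := by
          rw [hfac]; ring
      _ ≤ (q + n + 1) * (Real.Gamma (q+n+1) / Real.Gamma (q+1)) := by
          apply mul_le_mul key ih
            (mul_nonneg (pow_nonneg (by linarith) _) (by positivity)) (by linarith)

set_option maxHeartbeats 1000000 in
lemma summable_bessel (q : ℝ) (h1 : -1 < q) (h2 : q ≤ 1) (x : ℝ) :
    Summable (fun n : ℕ => ((1:ℝ)/4)^n * x^(2*n) /
      ((Real.Gamma (q+n+1) / Real.Gamma (q+1)) * n.factorial)) := by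
  have hq1 : (0:ℝ) < q + 1 := by linarith
  set t := x^2/4 with ht
  set c := (q+1)/2 with hc
  have hc0 : (0:ℝ) < c := by rw [hc]; linarith
  have htn : 0 ≤ t := by positivity
  have hxt : ∀ n : ℕ, ((1:ℝ)/4)^n * x^(2*n) = t^n := by
    intro n; rw [ht, div_pow (x^2) 4 n, ← pow_mul, one_div, inv_pow, div_eq_mul_inv, mul_comm]
  have hRpos : ∀ n : ℕ, 0 < Real.Gamma (q+n+1) / Real.Gamma (q+1) := fun n =>
    div_pos (gamma_pnn_pos q h1 n) (Real.Gamma_pos_of_pos (by linarith))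
  clear_value t c
  have hsum : Summable (fun n : ℕ => (2/(q+1)) * ((2*t/(q+1))^n / n.factorial)) :=
    (Real.summable_pow_div_factorial (2*t/(q+1))).mul_left _
  refine Summable.of_nonneg_of_le ?_ ?_ hsum
  · intro n
    rw [hxt n]
    have := hRpos n
    positivity
  · intro n
    rw [hxt n]
    set R := Real.Gamma (q+n+1) / Real.Gamma (q+1) with hR
    have hRp := hRpos n
    have hlow := poch_lower q h1 h2 n
    have hfac : (0:ℝ) < n.factorial := by positivity
    have hfac1 : (1:ℝ) ≤ n.factorial := by
      exact_mod_cast Nat.one_le_iff_ne_zero.mpr (Nat.factorial_ne_zero n)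
    rw [← hc, ← hR] at hlow
    have step1 : t^n / (R * n.factorial) ≤ t^n / (c^(n+1) * n.factorial) := by
      gcongr
      exact le_trans (le_mul_of_one_le_right (by positivity) hfac1) hlow
    refine step1.trans (le_of_eq ?_)
    have h2t : (2*t/(q+1)) = t / c := by rw [hc]; field_simp
    rw [h2t, div_pow, show (2/(q+1)) = c⁻¹ by rw [hc]; rw [inv_div], pow_succ]
    rw [div_div, mul_comm (c^n) c, mul_assoc, eq_comm, inv_mul_eq_div, div_div]
    ring_nf

theorem cusa_type_modified (p : ℝ) (hp1 : -1 < p) (hp2 : p ≤ 0) (x : ℝ) :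
    besselIn (p+1) x ≤ (1 + (p+1) * besselIn p x) / (p+2) := by
  have hq1 : (0:ℝ) < p + 1 := by linarith
  have hq2 : (0:ℝ) < p + 2 := by linarith
  have g1 : Real.Gamma (p+1) ≠ 0 := ne_of_gt (Real.Gamma_pos_of_pos hq1)
  have g2 : Real.Gamma (p+1+1) ≠ 0 := ne_of_gt (Real.Gamma_pos_of_pos (by linarith))
  have S0 := summable_bessel p hp1 (by linarith) x
  have S1 := summable_bessel (p+1) (by linarith) (by linarith) x
  have hind : Summable (fun n : ℕ => if n = 0 then (1:ℝ) else 0) :=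
    (hasSum_ite_eq 0 1).summable
  rw [le_div_iff₀ hq2]
  unfold besselIn
  rw [← tsum_mul_right]
  have hRHS : 1 + (p+1) * (∑' n : ℕ, ((1:ℝ)/4)^n * x^(2*n) /
        ((Real.Gamma (p+n+1) / Real.Gamma (p+1)) * n.factorial))
      = ∑' n : ℕ, ((p+1) * (((1:ℝ)/4)^n * x^(2*n) /
        ((Real.Gamma (p+n+1) / Real.Gamma (p+1)) * n.factorial)) + if n = 0 then 1 else 0) := by
    rw [Summable.tsum_add (S0.mul_left _) hind, tsum_mul_left, (hasSum_ite_eq 0 (1:ℝ)).tsum_eq]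
    ring
  rw [hRHS]
  apply Summable.tsum_le_tsum _ (S1.mul_right _) ((S0.mul_left _).add hind)
  intro n
  rcases n with _ | n
  · simp only [Nat.cast_zero, add_zero, pow_zero, mul_zero, Nat.factorial_zero,
      Nat.cast_one, mul_one, one_mul, if_pos rfl, div_self g1, div_self g2]
    norm_num
    try linarith
  · simp only [if_neg (Nat.succ_ne_zero n), add_zero]
    set A := ((1:ℝ)/4)^(n+1) * x^(2*(n+1)) with hA
    have hA0 : 0 ≤ A := by
      rw [hA, pow_mul]; positivity
    have hNpos : (0:ℝ) < p + (n+1:ℕ) + 1 := by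
      have : (0:ℝ) ≤ n := Nat.cast_nonneg n
      push_cast; linarith
    have hN2 : (p:ℝ) + 2 ≤ p + (n+1:ℕ) + 1 := by
      have : (0:ℝ) ≤ n := Nat.cast_nonneg n
      push_cast; linarith
    have hG : 0 < Real.Gamma (p + (n+1:ℕ) + 1) := gamma_pnn_pos p hp1 (n+1)
    have hG1 : 0 < Real.Gamma (p+1) := Real.Gamma_pos_of_pos hq1
    have hF : (0:ℝ) < (Nat.factorial (n+1) : ℝ) := by positivity
    have hsplit : Real.Gamma (p + 1 + (n+1:ℕ) + 1)
        = (p + (n+1:ℕ) + 1) * Real.Gamma (p + (n+1:ℕ) + 1) := by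
      have h : (p + 1 + ((n:ℕ)+1:ℕ) + 1 : ℝ) = (p + ((n:ℕ)+1:ℕ) + 1) + 1 := by push_cast; ring
      rw [h, Real.Gamma_add_one (ne_of_gt hNpos)]
    have hsplit2 : Real.Gamma (p+1+1) = (p+1) * Real.Gamma (p+1) :=
      Real.Gamma_add_one (ne_of_gt hq1)
    rw [hsplit, hsplit2]
    set N := (p + ((n:ℕ)+1:ℕ) + 1 : ℝ) with hNdef
    set G := Real.Gamma (p + (n+1:ℕ) + 1) with hGdef
    set G1 := Real.Gamma (p+1) with hG1def
    set F := (Nat.factorial (n+1) : ℝ) with hFdef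
    have key : (p+2) / ((N*G/((p+1)*G1)) * F) ≤ (p+1) / ((G/G1) * F) := by
      have d1pos : 0 < (N*G/((p+1)*G1)) * F := by positivity
      have d0pos : 0 < (G/G1) * F := by positivity
      rw [div_le_div_iff₀ d1pos d0pos]
      have hEq : (p+1) * ((N*G/((p+1)*G1))*F) = N * ((G/G1)*F) := by
        field_simp
      rw [hEq]
      exact mul_le_mul_of_nonneg_right hN2 (le_of_lt d0pos)
    calc A / ((N*G/((p+1)*G1)) * F) * (p+2) = A * ((p+2) / ((N*G/((p+1)*G1)) * F)) := by ring
      _ ≤ A * ((p+1) / ((G/G1) * F)) := mul_le_mul_of_nonneg_left key hA0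
      _ = (p+1) * (A / ((G/G1) * F)) := by ring
end

section
/- For all real x ≠ 0, tanh(x)/x + 3·cosh(x)/(2 + cosh(x)) ≥ 2. -/
open Real

private lemma aux_nonneg (F F' : ℝ → ℝ) (hd : ∀ y : ℝ, HasDerivAt F (F' y) y)
    (h0 : F 0 = 0) (hF' : ∀ y : ℝ, 0 ≤ y → 0 ≤ F' y) {x : ℝ} (hx : 0 ≤ x) : 0 ≤ F x := by
  have mono : MonotoneOn F (Set.Ici 0) := by
    apply monotoneOn_of_deriv_nonneg (convex_Ici 0)
    · exact fun y _ => (hd y).continuousAt.continuousWithinAt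
    · exact fun y _ => (hd y).differentiableAt.differentiableWithinAt
    · intro y hy
      rw [interior_Ici] at hy
      rw [(hd y).deriv]
      exact hF' y (le_of_lt hy)
  calc (0:ℝ) = F 0 := h0.symm
  _ ≤ F x := mono Set.self_mem_Ici hx hx

private lemma F2_nonneg : ∀ x : ℝ, 0 ≤ x →
    0 ≤ Real.sinh x * (8 * Real.cosh x - 6) + 2 * x * (2 * Real.cosh x ^ 2 - 2 * Real.cosh x - 1) := by
  intro x hx
  apply aux_nonneg
    (fun y => Real.sinh y * (8 * Real.cosh y - 6) + 2 * y * (2 * Real.cosh y ^ 2 - 2 * Real.cosh y - 1))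
    (fun y => 10 * (2 * Real.cosh y + 1) * (Real.cosh y - 1) + 2 * y * Real.sinh y * (4 * Real.cosh y - 2))
  · intro y
    have hs := Real.hasDerivAt_sinh y
    have hc := Real.hasDerivAt_cosh y
    have h1 := hs.mul ((hc.const_mul (8:ℝ)).sub (hasDerivAt_const y (6:ℝ)))
    have h2 := ((hasDerivAt_id y).const_mul (2:ℝ)).mul
      ((((hc.pow 2).const_mul (2:ℝ)).sub (hc.const_mul (2:ℝ))).sub (hasDerivAt_const y (1:ℝ)))
    have h := h1.add h2
    refine h.congr_deriv ?_
    simp only [Pi.add_apply, Pi.sub_apply, Pi.pow_apply, id_eq, Nat.cast_ofNat]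
    linear_combination 8 * Real.sinh_sq y
  · simp
  · intro y hy
    have h1 := Real.one_le_cosh y
    have h2 : 0 ≤ Real.sinh y := Real.sinh_nonneg_iff.mpr hy
    nlinarith [mul_nonneg (mul_nonneg hy h2) (by linarith : (0:ℝ) ≤ 4 * Real.cosh y - 2),
      mul_nonneg (by linarith : (0:ℝ) ≤ 2 * Real.cosh y + 1) (by linarith : (0:ℝ) ≤ Real.cosh y - 1)]
  · exact hx

private lemma F1_nonneg : ∀ x : ℝ, 0 ≤ x →
    0 ≤ 3 * Real.cosh x ^ 2 - 1 - 2 * Real.cosh x + 2 * x * Real.sinh x * (Real.cosh x - 2) := by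
  intro x hx
  apply aux_nonneg
    (fun y => 3 * Real.cosh y ^ 2 - 1 - 2 * Real.cosh y + 2 * y * Real.sinh y * (Real.cosh y - 2))
    (fun y => Real.sinh y * (8 * Real.cosh y - 6) + 2 * y * (2 * Real.cosh y ^ 2 - 2 * Real.cosh y - 1))
  · intro y
    have hs := Real.hasDerivAt_sinh y
    have hc := Real.hasDerivAt_cosh y
    have h1 := (((hc.pow 2).const_mul (3:ℝ)).sub (hasDerivAt_const y (1:ℝ))).sub (hc.const_mul (2:ℝ))
    have h2 := (((hasDerivAt_id y).const_mul (2:ℝ)).mul hs).mul (hc.sub (hasDerivAt_const y (2:ℝ)))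
    have h := h1.add h2
    refine h.congr_deriv ?_
    simp only [Pi.add_apply, Pi.sub_apply, Pi.pow_apply, id_eq, Nat.cast_ofNat, Pi.mul_apply]
    linear_combination (2 * y) * Real.sinh_sq y
  · norm_num
  · exact F2_nonneg
  · exact hx

private lemma F0_nonneg : ∀ x : ℝ, 0 ≤ x →
    0 ≤ Real.sinh x * (2 + Real.cosh x) + x * Real.cosh x ^ 2 - 4 * (x * Real.cosh x) := by
  intro x hx
  apply aux_nonneg
    (fun y => Real.sinh y * (2 + Real.cosh y) + y * Real.cosh y ^ 2 - 4 * (y * Real.cosh y))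
    (fun y => 3 * Real.cosh y ^ 2 - 1 - 2 * Real.cosh y + 2 * y * Real.sinh y * (Real.cosh y - 2))
  · intro y
    have hs := Real.hasDerivAt_sinh y
    have hc := Real.hasDerivAt_cosh y
    have h1 := hs.mul ((hasDerivAt_const y (2:ℝ)).add hc)
    have h2 := (hasDerivAt_id y).mul (hc.pow 2)
    have h3 := ((hasDerivAt_id y).mul hc).const_mul (4:ℝ)
    have h := (h1.add h2).sub h3
    refine h.congr_deriv ?_
    simp only [Pi.add_apply, Pi.sub_apply, Pi.pow_apply, id_eq, Nat.cast_ofNat]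
    linear_combination 1 * Real.sinh_sq y
  · simp
  · exact F1_nonneg
  · exact hx

private lemma main_pos (x : ℝ) (hx : 0 < x) :
    Real.tanh x / x + 3 * Real.cosh x / (2 + Real.cosh x) ≥ 2 := by
  have hc := Real.cosh_pos x
  have key := F0_nonneg x hx.le
  rw [ge_iff_le, Real.tanh_eq_sinh_div_cosh, div_div,
    div_add_div _ _ (by positivity) (by positivity), le_div_iff₀ (by positivity)]
  nlinarith [key]

theorem tanh_cosh_inequality (x : ℝ) (hx : x ≠ 0) :
    Real.tanh x / x + 3 * Real.cosh x / (2 + Real.cosh x) ≥ 2 := by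
  rcases hx.lt_or_gt with h | h
  · have := main_pos (-x) (by linarith)
    simpa [Real.tanh_neg, Real.cosh_neg, neg_div_neg_eq] using this
  · exact main_pos x h
end
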